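/- The generalized Fermat equation X^p + Y^q = Z^r has no solution in pairwise coprime non-constant polynomials X, Y, Z over C when 1/p + 1/q + 1/r <= 1 (p, q, r >= 2 integers). -/

import Mathlib

open Polynomial UniqueFactorizationMonoid UniqueFactorizationDomain

theorem generalized_fermat_polynomials (p q r : ℕ) (hp : 2 ≤ p) (hq : 2 ≤ q) (hr : 2 ≤ r)
    (hpqr : (1 : ℚ) / p + 1 / q + 1 / r ≤ 1)
    (X Y Z : ℂ[X]) (hX : 0 < X.natDegree) (hY : 0 < Y.natDegree) (hZ : 0 < Z.natDegree)
    (hXY : IsCoprime X Y) (hXZ : IsCoprime X Z) (hYZ : IsCoprime Y Z) :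
    X^p + Y^q ≠ Z^r := by
  classical
  intro heq
  have hX0 : X ≠ 0 := fun h => by simp [h] at hX
  have hY0 : Y ≠ 0 := fun h => by simp [h] at hY
  have hZ0 : Z ≠ 0 := fun h => by simp [h] at hZ
  have hp0 : 0 < p := by omega
  have hq0 : 0 < q := by omega
  have hr0 : 0 < r := by omega
  have ha : X ^ p ≠ 0 := pow_ne_zero _ hX0
  have hb : Y ^ q ≠ 0 := pow_ne_zero _ hY0
  have hc : -(Z ^ r) ≠ 0 := neg_ne_zero.mpr (pow_ne_zero _ hZ0)
  have hsum : X ^ p + Y ^ q + -(Z ^ r) = 0 := by rw [heq]; ring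
  have hab : IsCoprime (X ^ p) (Y ^ q) := (hXY.pow)
  have hbc : IsCoprime (Y ^ q) (-(Z ^ r)) := (hYZ.pow).neg_right
  have hca : IsCoprime (-(Z ^ r)) (X ^ p) := ((hXZ.symm.pow).neg_left)
  rcases Polynomial.abc ha hb hc hab hsum with ⟨h1, h2, h3⟩ | ⟨_, _, h3⟩
  · -- degree bound
    set R := (radical (X ^ p * Y ^ q * -(Z ^ r))).natDegree with hR
    have hrad : radical (X ^ p * Y ^ q * -(Z ^ r)) = radical (X * Y * Z) := by
      rw [radical_mul ((hXZ.pow.mul_left hYZ.pow).neg_right).isRelPrime, radical_mul hab.isRelPrime,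
        radical_neg, radical_pow X hp0.ne', radical_pow Y hq0.ne', radical_pow Z hr0.ne',
        ← radical_mul hXY.isRelPrime, ← radical_mul (hXZ.mul_left hYZ).isRelPrime]
    have hRle : R ≤ X.natDegree + Y.natDegree + Z.natDegree := by
      rw [hR, hrad]
      calc (radical (X * Y * Z)).natDegree ≤ (X * Y * Z).natDegree :=
            natDegree_le_of_dvd radical_dvd_self (mul_ne_zero (mul_ne_zero hX0 hY0) hZ0)
        _ = X.natDegree + Y.natDegree + Z.natDegree := by
            rw [natDegree_mul (mul_ne_zero hX0 hY0) hZ0, natDegree_mul hX0 hY0]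
    rw [natDegree_pow] at h1 h2
    rw [natDegree_neg, natDegree_pow] at h3
    -- now arithmetic over ℚ
    have hx : (X.natDegree : ℚ) ≤ (R - 1) / p := by
      rw [le_div_iff₀ (by positivity), mul_comm]
      have : (p * X.natDegree + 1 : ℚ) ≤ R := by exact_mod_cast h1
      linarith
    have hy : (Y.natDegree : ℚ) ≤ (R - 1) / q := by
      rw [le_div_iff₀ (by positivity), mul_comm]
      have : (q * Y.natDegree + 1 : ℚ) ≤ R := by exact_mod_cast h2
      linarith
    have hz : (Z.natDegree : ℚ) ≤ (R - 1) / r := by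
      rw [le_div_iff₀ (by positivity), mul_comm]
      have : (r * Z.natDegree + 1 : ℚ) ≤ R := by exact_mod_cast h3
      linarith
    have hR1 : (1 : ℚ) ≤ R := by
      have : p * X.natDegree + 1 ≤ R := h1
      have : 1 ≤ R := by omega
      exact_mod_cast this
    have hD : (X.natDegree + Y.natDegree + Z.natDegree : ℚ) ≤ (R - 1) := by
      have h := add_le_add (add_le_add hx hy) hz
      have hsplit : ((R : ℚ) - 1) / p + (R - 1) / q + (R - 1) / r
          = (R - 1) * (1 / p + 1 / q + 1 / r) := by ring
      have hRpos : (0 : ℚ) ≤ (R : ℚ) - 1 := by linarith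
      calc (X.natDegree + Y.natDegree + Z.natDegree : ℚ)
          ≤ (R - 1) * (1 / p + 1 / q + 1 / r) := by rw [← hsplit]; exact h
        _ ≤ (R - 1) * 1 := by exact mul_le_mul_of_nonneg_left hpqr hRpos
        _ = R - 1 := by ring
    have hRle' : (R : ℚ) ≤ X.natDegree + Y.natDegree + Z.natDegree := by exact_mod_cast hRle
    linarith
  · -- derivative case
    have : ((-(Z ^ r)).natDegree) = 0 := natDegree_eq_zero_of_derivative_eq_zero h3
    rw [natDegree_neg, natDegree_pow] at this
    rcases Nat.mul_eq_zero.mp this with h | h <;> omega
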